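/- Let f : ℝ^d → ℝ be C⁶ with a local minimum at x*. Let F₁ = ker ∇²f(x*), E₁ its orthogonal complement, F₂ = {h ∈ F₁ : ∀h' ∈ F₁, ∇⁴f(x*)·h ⊗ h'^{⊗3} = 0}, and E₂ the orthogonal complement of F₂ in F₁. Then ∇³f(x*) · p_{E₁}(h) ⊗ p_{F₂}(h)^{⊗2} = 0 for all h ∈ ℝ^d. -/

import Mathlib

open Set Filter Topology

section OneDim

lemma eqon_iter {n : ℕ} {t : ℝ} (ht : 0 < t) (G : ℕ → ℝ → ℝ)
    (hd : ∀ k ≤ n, ∀ s, HasDerivAt (G k) (G (k+1) s) s) :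
    ∀ k ≤ n + 1, ∀ y ∈ Icc (0:ℝ) t, iteratedDerivWithin k (G 0) (Icc 0 t) y = G k y := by
  intro k
  induction k with
  | zero => intro _ y _; simp
  | succ k ih =>
    intro hk y hy
    rw [iteratedDerivWithin_succ]
    have h1 : EqOn (iteratedDerivWithin k (G 0) (Icc 0 t)) (G k) (Icc 0 t) :=
      fun z hz => ih (by omega) z hz
    rw [derivWithin_congr h1 (h1 hy)]
    exact ((hd k (by omega) y).hasDerivWithinAt).derivWithin ((uniqueDiffOn_Icc ht) y hy)

lemma chain_nonneg (n : ℕ) (G : ℕ → ℝ → ℝ)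
    (hsm : ContDiff ℝ n (G 0))
    (hd : ∀ k ≤ n, ∀ s, HasDerivAt (G k) (G (k+1) s) s)
    (hcont : Continuous (G (n+1)))
    (hmin : ∀ᶠ s in 𝓝 (0:ℝ), G 0 0 ≤ G 0 s)
    (hz : ∀ k, 1 ≤ k → k ≤ n → G k 0 = 0) :
    0 ≤ G (n+1) 0 := by
  have key : ∀ ε > (0:ℝ), ∃ ξ, 0 < ξ ∧ ξ < ε ∧ 0 ≤ G (n+1) ξ := by
    intro ε hε
    obtain ⟨δ, hδ, hδmin⟩ := Metric.eventually_nhds_iff.1 hmin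
    set t := min (ε/2) (δ/2) with ht_def
    have ht : 0 < t := lt_min (by linarith) (by linarith)
    have eqon := eqon_iter ht G hd
    have h0mem : (0:ℝ) ∈ Icc (0:ℝ) t := ⟨le_refl _, ht.le⟩
    have hdiff : DifferentiableOn ℝ (iteratedDerivWithin n (G 0) (Icc 0 t)) (Ioo 0 t) := by
      apply DifferentiableOn.congr
        (f := G n) (fun z _ => ((hd n le_rfl z).differentiableAt).differentiableWithinAt)
      exact fun z hz => eqon n (by omega) z (Ioo_subset_Icc_self hz)
    obtain ⟨ξ, hξ, heq⟩ := taylor_mean_remainder_lagrange (f := G 0) (x₀ := 0) (x := t) ht.ne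
      (by rw [uIcc_of_le ht.le]; exact hsm.contDiffOn.mono (subset_univ _))
      (by rw [uIcc_of_le ht.le, uIoo_of_le ht.le]; exact hdiff)
    rw [uIcc_of_le ht.le] at heq
    rw [uIoo_of_le ht.le] at hξ
    refine ⟨ξ, hξ.1, lt_of_lt_of_le hξ.2 (le_trans (min_le_left _ _) (by linarith)), ?_⟩
    have htay : taylorWithinEval (G 0) n (Icc 0 t) 0 t = G 0 0 := by
      rw [taylor_within_apply]
      rw [Finset.sum_eq_single_of_mem 0 (Finset.mem_range.2 (by omega))]
      · simp
      · intro k hk hk0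
        rw [eqon k (by simp at hk; omega) 0 h0mem, hz k (by omega) (by simp at hk; omega)]
        simp
    rw [htay, eqon (n+1) le_rfl ξ (Ioo_subset_Icc_self hξ), sub_zero] at heq
    have hGt : G 0 0 ≤ G 0 t := by
      apply hδmin
      rw [Real.dist_eq, sub_zero, abs_of_pos ht]
      exact lt_of_le_of_lt (min_le_right _ _) (by linarith)
    have hineq : 0 ≤ G (n+1) ξ * t ^ (n+1) / ((n+1).factorial : ℝ) := by
      rw [← heq]; linarith
    have hT : 0 < t ^ (n+1) := pow_pos ht _
    have hF : (0:ℝ) < ((n+1).factorial : ℝ) := by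
      exact_mod_cast Nat.factorial_pos (n+1)
    by_contra hA
    push_neg at hA
    have : G (n+1) ξ * t ^ (n+1) / ((n+1).factorial : ℝ) < 0 :=
      div_neg_of_neg_of_pos (mul_neg_of_neg_of_pos hA hT) hF
    linarith
  by_contra hneg
  push_neg at hneg
  have h2 : ∀ᶠ s in 𝓝 (0:ℝ), G (n+1) s < 0 :=
    (hcont.tendsto 0).eventually_lt_const hneg
  obtain ⟨δ', hδ', hball⟩ := Metric.eventually_nhds_iff.1 h2
  obtain ⟨ξ, hp1, hp2, hp3⟩ := key δ' hδ'
  have : G (n+1) ξ < 0 := by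
    apply hball
    rw [Real.dist_eq, sub_zero, abs_of_pos hp1]
    exact hp2
  linarith

end OneDim

section Aux

variable {E : Type*} [NormedAddCommGroup E] [NormedSpace ℝ E]

lemma hasDerivAt_iter_multi {f : E → ℝ} (hf : ContDiff ℝ 6 f) {k : ℕ} (hk : k + 1 ≤ 6)
    {c : ℝ → E} {c' : E} {t : ℝ} (hc : HasDerivAt c c' t)
    (M : Fin k → ℝ → E) (M' : Fin k → E) (hM : ∀ i, HasDerivAt (M i) (M' i) t) :
    HasDerivAt (fun s => iteratedFDeriv ℝ k f (c s) (fun i => M i s))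
      (iteratedFDeriv ℝ (k+1) f (c t) (Fin.cons c' (fun i => M i t)) +
        ∑ i, iteratedFDeriv ℝ k f (c t) (Function.update (fun i => M i t) i (M' i))) t := by
  have hΦ : ContDiff ℝ 1 (iteratedFDeriv ℝ k f) := by
    apply hf.iteratedFDeriv_right
    norm_cast
    omega
  have hΦd : DifferentiableAt ℝ (iteratedFDeriv ℝ k f) (c t) :=
    (hΦ.differentiable one_ne_zero) _
  have hcΦ : HasDerivAt (fun s => iteratedFDeriv ℝ k f (c s))
      (fderiv ℝ (iteratedFDeriv ℝ k f) (c t) c') t :=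
    hΦd.hasFDerivAt.comp_hasDerivAt t hc
  have big := HasFDerivAt.linear_multilinear_comp hcΦ.hasFDerivAt
    (fun i => (hM i).hasFDerivAt)
    (ContinuousLinearMap.id ℝ (ContinuousMultilinearMap ℝ (fun _ : Fin k => E) ℝ))
  have h2 := big.hasDerivAt
  convert h2 using 1
  case e'_4 => rfl
  case e'_5 => rfl
  case e'_8 => rfl
  rw [iteratedFDeriv_succ_apply_left]
  simp [Fin.tail_cons]

lemma sym2 {F' : Type*} [NormedAddCommGroup F'] [NormedSpace ℝ F'] {g : E → F'}
    (hg : ContDiff ℝ 2 g) (y v w : E) :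
    iteratedFDeriv ℝ 2 g y ![v, w] = iteratedFDeriv ℝ 2 g y ![w, v] := by
  rw [iteratedFDeriv_two_apply, iteratedFDeriv_two_apply]
  have hs := (hg.contDiffAt (x := y)).isSymmSndFDerivAt (by simp)
  simpa using hs.eq v w

lemma sym3a {f : E → ℝ} (hf : ContDiff ℝ 6 f) (y u v w : E) :
    iteratedFDeriv ℝ 3 f y ![u, v, w] = iteratedFDeriv ℝ 3 f y ![v, u, w] := by
  have h1 : Fin.init ![u, v, w] = ![u, v] := by
    funext i; fin_cases i <;> simp [Fin.init]
  have h2 : Fin.init ![v, u, w] = ![v, u] := by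
    funext i; fin_cases i <;> simp [Fin.init]
  have e1 : iteratedFDeriv ℝ 3 f y ![u, v, w]
      = iteratedFDeriv ℝ 2 (fun z => fderiv ℝ f z) y ![u, v] w := by
    show iteratedFDeriv ℝ (2+1) f y ![u, v, w] = _
    rw [iteratedFDeriv_succ_apply_right, h1]; rfl
  have e2 : iteratedFDeriv ℝ 3 f y ![v, u, w]
      = iteratedFDeriv ℝ 2 (fun z => fderiv ℝ f z) y ![v, u] w := by
    show iteratedFDeriv ℝ (2+1) f y ![v, u, w] = _
    rw [iteratedFDeriv_succ_apply_right, h2]; rfl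
  rw [e1, e2, sym2 (hf.fderiv_right (by norm_num)) y u v]

lemma sym3b {f : E → ℝ} (hf : ContDiff ℝ 6 f) (y u v w : E) :
    iteratedFDeriv ℝ 3 f y ![u, v, w] = iteratedFDeriv ℝ 3 f y ![u, w, v] := by
  set H := ContinuousMultilinearMap ℝ (fun _ : Fin 2 => E) ℝ
  set L : H →L[ℝ] H :=
    ((ContinuousMultilinearMap.domDomCongrₗᵢ ℝ E ℝ (Equiv.swap (0 : Fin 2) 1)).toContinuousLinearEquiv : H →L[ℝ] H) with hL
  have hLapp : ∀ (Ψ : H) (m : Fin 2 → E), L Ψ m = Ψ ![m 1, m 0] := by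
    intro Ψ m
    have : (fun i => m ((Equiv.swap (0 : Fin 2) 1) i)) = ![m 1, m 0] := by
      funext i; fin_cases i <;> simp
    simp only [hL]
    erw [ContinuousMultilinearMap.domDomCongr_apply]
    rw [this]
  have hsymm : (fun z => L (iteratedFDeriv ℝ 2 f z)) = iteratedFDeriv ℝ 2 f := by
    funext z
    ext m
    rw [hLapp]
    have hm : m = ![m 0, m 1] := by funext i; fin_cases i <;> rfl
    conv_rhs => rw [hm]
    exact sym2 (hf.of_le (by norm_num)) z (m 1) (m 0)
  have hΦd : Differentiable ℝ (iteratedFDeriv ℝ 2 f) :=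
    (hf.iteratedFDeriv_right (m := 1) (by norm_cast)).differentiable one_ne_zero
  have hfd2 : fderiv ℝ (fun z => L (iteratedFDeriv ℝ 2 f z)) y
      = L ∘L fderiv ℝ (iteratedFDeriv ℝ 2 f) y :=
    (L.hasFDerivAt.comp y (hΦd y).hasFDerivAt).fderiv
  have key : L ∘L fderiv ℝ (iteratedFDeriv ℝ 2 f) y = fderiv ℝ (iteratedFDeriv ℝ 2 f) y := by
    rw [← hfd2, hsymm]
  have e1 : iteratedFDeriv ℝ 3 f y ![u, v, w]
      = (fderiv ℝ (iteratedFDeriv ℝ 2 f) y u) ![v, w] := by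
    show iteratedFDeriv ℝ (2+1) f y ![u, v, w] = _
    rw [iteratedFDeriv_succ_apply_left]
    congr 1 <;> first | simp | (funext i; fin_cases i <;> rfl)
  have e2 : iteratedFDeriv ℝ 3 f y ![u, w, v]
      = (fderiv ℝ (iteratedFDeriv ℝ 2 f) y u) ![w, v] := by
    show iteratedFDeriv ℝ (2+1) f y ![u, w, v] = _
    rw [iteratedFDeriv_succ_apply_left]
    congr 1 <;> first | simp | (funext i; fin_cases i <;> rfl)
  rw [e1, e2]
  conv_lhs => rw [← key]
  rw [ContinuousLinearMap.coe_comp', Function.comp_apply, hLapp]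
  have hmm : (![![v, w] 1, ![v, w] 0] : Fin 2 → E) = ![w, v] := by
    funext i; fin_cases i <;> simp
  rw [hmm]

lemma sm_upd {k : ℕ} (Ψ : ContinuousMultilinearMap ℝ (fun _ : Fin k => E) ℝ)
    (m : Fin k → E) (i : Fin k) (c : ℝ) :
    Ψ (Function.update m i (c • m i)) = c * Ψ m := by
  rw [Ψ.map_update_smul m i c (m i), Function.update_eq_self, smul_eq_mul]

lemma sm2_0 (Ψ : ContinuousMultilinearMap ℝ (fun _ : Fin 2 => E) ℝ) (c : ℝ) (p q : E) :
    Ψ ![c • p, q] = c * Ψ ![p, q] := by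
  have h1 : ![c • p, q] = Function.update ![p, q] 0 (c • (![p, q] 0)) := by
    funext i; fin_cases i <;> simp
  rw [h1, sm_upd]

lemma sm2_1 (Ψ : ContinuousMultilinearMap ℝ (fun _ : Fin 2 => E) ℝ) (c : ℝ) (p q : E) :
    Ψ ![p, c • q] = c * Ψ ![p, q] := by
  have h1 : ![p, c • q] = Function.update ![p, q] 1 (c • (![p, q] 1)) := by
    funext i; fin_cases i <;> simp
  rw [h1, sm_upd]

lemma sm3_0 (Ψ : ContinuousMultilinearMap ℝ (fun _ : Fin 3 => E) ℝ) (c : ℝ) (p q r : E) :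
    Ψ ![c • p, q, r] = c * Ψ ![p, q, r] := by
  have h1 : ![c • p, q, r] = Function.update ![p, q, r] 0 (c • (![p, q, r] 0)) := by
    funext i; fin_cases i <;> simp
  rw [h1, sm_upd]


lemma sm3_1 (Ψ : ContinuousMultilinearMap ℝ (fun _ : Fin 3 => E) ℝ) (c : ℝ) (p q r : E) :
    Ψ ![p, c • q, r] = c * Ψ ![p, q, r] := by
  have h1 : ![p, c • q, r] = Function.update ![p, q, r] 1 (c • (![p, q, r] 1)) := by
    funext i; fin_cases i <;> simp
  rw [h1, sm_upd]

lemma sm3_2 (Ψ : ContinuousMultilinearMap ℝ (fun _ : Fin 3 => E) ℝ) (c : ℝ) (p q r : E) :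
    Ψ ![p, q, c • r] = c * Ψ ![p, q, r] := by
  have h1 : ![p, q, c • r] = Function.update ![p, q, r] 2 (c • (![p, q, r] 2)) := by
    funext i; fin_cases i <;> simp
  rw [h1, sm_upd]

lemma sym2' {f : E → ℝ} (hf : ContDiff ℝ 6 f) (y v w : E) :
    iteratedFDeriv ℝ 2 f y ![v, w] = iteratedFDeriv ℝ 2 f y ![w, v] :=
  sym2 (hf.of_le (by norm_num)) y v w

lemma chain_all {f : E → ℝ} (hf : ContDiff ℝ 6 f) (x a b : E) :
    ∃ G : ℕ → ℝ → ℝ,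
      ContDiff ℝ 6 (G 0) ∧
      (∀ s, G 0 s = f (x + s • b + s ^ 2 • a)) ∧
      (∀ k ≤ 3, ∀ s, HasDerivAt (G k) (G (k+1) s) s) ∧
      Continuous (G 4) ∧
      G 0 0 = f x ∧
      G 1 0 = iteratedFDeriv ℝ 1 f x ![b] ∧
      G 2 0 = iteratedFDeriv ℝ 2 f x ![b, b] + iteratedFDeriv ℝ 1 f x ![(2:ℝ) • a] ∧
      G 3 0 = iteratedFDeriv ℝ 3 f x ![b, b, b]
        + iteratedFDeriv ℝ 2 f x ![(2:ℝ) • a, b] + iteratedFDeriv ℝ 2 f x ![b, (2:ℝ) • a]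
        + iteratedFDeriv ℝ 2 f x ![b, (2:ℝ) • a] + iteratedFDeriv ℝ 1 f x ![(0:E)] ∧
      G 4 0 = iteratedFDeriv ℝ 4 f x ![b, b, b, b]
        + iteratedFDeriv ℝ 3 f x ![(2:ℝ) • a, b, b]
        + 2 * iteratedFDeriv ℝ 3 f x ![b, (2:ℝ) • a, b]
        + 3 * iteratedFDeriv ℝ 3 f x ![b, b, (2:ℝ) • a]
        + 3 * iteratedFDeriv ℝ 2 f x ![(2:ℝ) • a, (2:ℝ) • a]
        + iteratedFDeriv ℝ 2 f x ![(0:E), b]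
        + 3 * iteratedFDeriv ℝ 2 f x ![b, (0:E)]
        + iteratedFDeriv ℝ 1 f x ![(0:E)] := by
  set u : E := (2:ℝ) • a with hu
  set γ : ℝ → E := fun s => x + s • b + s ^ 2 • a with hγdef
  set v : ℝ → E := fun s => b + (2 * s) • a with hvdef
  set cu : ℝ → E := fun _ => u with hcudef
  set cz : ℝ → E := fun _ => (0:E) with hczdef
  have hγ : ∀ t, HasDerivAt γ (v t) t := by
    intro t
    have h1 : HasDerivAt (fun s : ℝ => x + s • b + s ^ 2 • a)
        (0 + (1:ℝ) • b + ((2:ℕ) * t ^ 1 : ℝ) • a) t := by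
      exact ((hasDerivAt_const t x).add ((hasDerivAt_id t).smul_const b)).add
        ((hasDerivAt_pow 2 t).smul_const a)
    have h2 : (0 + (1:ℝ) • b + ((2:ℕ) * t ^ 1 : ℝ) • a) = v t := by
      simp [hvdef]
    rw [← h2]; exact h1
  have hv : ∀ t, HasDerivAt v u t := by
    intro t
    have h1 : HasDerivAt (fun s : ℝ => b + (2 * s) • a) (0 + ((2:ℝ) * 1) • a) t :=
      (hasDerivAt_const t b).add (((hasDerivAt_id t).const_mul 2).smul_const a)
    have h2 : (0 + ((2:ℝ) * 1) • a) = u := by simp [hu]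
    rw [← h2]; exact h1
  have hcu : ∀ t, HasDerivAt cu (0:E) t := fun t => hasDerivAt_const t u
  have hcz : ∀ t, HasDerivAt cz (0:E) t := fun t => hasDerivAt_const t (0:E)
  have hγ0 : γ 0 = x := by simp [hγdef]
  have hv0 : v 0 = b := by simp [hvdef]
  -- the functions
  set G0 : ℝ → ℝ := fun s => f (γ s) with hG0
  set G1 : ℝ → ℝ := fun s => iteratedFDeriv ℝ 1 f (γ s) (fun i => ![v] i s) with hG1
  set G2 : ℝ → ℝ := fun s => iteratedFDeriv ℝ 2 f (γ s) (fun i => ![v, v] i s)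
    + iteratedFDeriv ℝ 1 f (γ s) (fun i => ![cu] i s) with hG2
  set G3 : ℝ → ℝ := fun s =>
      iteratedFDeriv ℝ 3 f (γ s) (fun i => ![v, v, v] i s)
    + iteratedFDeriv ℝ 2 f (γ s) (fun i => ![cu, v] i s)
    + iteratedFDeriv ℝ 2 f (γ s) (fun i => ![v, cu] i s)
    + iteratedFDeriv ℝ 2 f (γ s) (fun i => ![v, cu] i s)
    + iteratedFDeriv ℝ 1 f (γ s) (fun i => ![cz] i s) with hG3
  set G4 : ℝ → ℝ := fun s =>
      iteratedFDeriv ℝ 4 f (γ s) (fun i => ![v, v, v, v] i s)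
    + iteratedFDeriv ℝ 3 f (γ s) (fun i => ![cu, v, v] i s)
    + iteratedFDeriv ℝ 3 f (γ s) (fun i => ![v, cu, v] i s)
    + iteratedFDeriv ℝ 3 f (γ s) (fun i => ![v, v, cu] i s)
    + (iteratedFDeriv ℝ 3 f (γ s) (fun i => ![v, cu, v] i s)
      + iteratedFDeriv ℝ 2 f (γ s) (fun i => ![cz, v] i s)
      + iteratedFDeriv ℝ 2 f (γ s) (fun i => ![cu, cu] i s))
    + (iteratedFDeriv ℝ 3 f (γ s) (fun i => ![v, v, cu] i s)
      + iteratedFDeriv ℝ 2 f (γ s) (fun i => ![cu, cu] i s)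
      + iteratedFDeriv ℝ 2 f (γ s) (fun i => ![v, cz] i s))
    + (iteratedFDeriv ℝ 3 f (γ s) (fun i => ![v, v, cu] i s)
      + iteratedFDeriv ℝ 2 f (γ s) (fun i => ![cu, cu] i s)
      + iteratedFDeriv ℝ 2 f (γ s) (fun i => ![v, cz] i s))
    + (iteratedFDeriv ℝ 2 f (γ s) (fun i => ![v, cz] i s)
      + iteratedFDeriv ℝ 1 f (γ s) (fun i => ![cz] i s)) with hG4
  have d0 : ∀ t, HasDerivAt G0 (G1 t) t := by
    intro t
    have hdf : HasFDerivAt f (fderiv ℝ f (γ t)) (γ t) :=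
      (hf.differentiable (by norm_num) (γ t)).hasFDerivAt
    have h := hdf.comp_hasDerivAt t (hγ t)
    have e : fderiv ℝ f (γ t) (v t) = G1 t := by
      rw [hG1]; simp [iteratedFDeriv_one_apply]
    rw [← e]; exact h
  have d1 : ∀ t, HasDerivAt G1 (G2 t) t := by
    intro t
    have h := hasDerivAt_iter_multi hf (by norm_num) (hγ t) ![v] ![u]
      (by intro i; fin_cases i <;> first | exact hv t | exact hcu t | exact hcz t)
    have t1 : Fin.cons (v t) (fun i => ![v] i t) = (fun i => ![v, v] i t) := by
      funext i; induction i using Fin.cases <;> simp [Matrix.cons_val_succ]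
    have t2 : Function.update (fun i => ![v] i t) 0 (![u] 0) = (fun i => ![cu] i t) := by
      funext i; fin_cases i <;> simp [hcudef, hczdef, Matrix.vecHead, Matrix.vecTail, Function.update]
    have e : iteratedFDeriv ℝ (1+1) f (γ t) (Fin.cons (v t) (fun i => ![v] i t)) +
        ∑ i, iteratedFDeriv ℝ 1 f (γ t) (Function.update (fun i => ![v] i t) i (![u] i))
        = G2 t := by
      rw [Fin.sum_univ_one]
      rw [hG2, t1, t2]
    rw [← e]; exact h
  have d2 : ∀ t, HasDerivAt G2 (G3 t) t := by
    intro t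
    have h1 := hasDerivAt_iter_multi hf (by norm_num) (hγ t) ![v, v] ![u, u]
      (by intro i; fin_cases i <;> first | exact hv t | exact hcu t | exact hcz t)
    have h2 := hasDerivAt_iter_multi hf (by norm_num) (hγ t) ![cu] ![(0:E)]
      (by intro i; fin_cases i <;> first | exact hv t | exact hcu t | exact hcz t)
    have h := h1.add h2
    have t1 : Fin.cons (v t) (fun i => ![v, v] i t) = (fun i => ![v, v, v] i t) := by
      funext i; induction i using Fin.cases <;> simp [Matrix.cons_val_succ]
    have t2 : Function.update (fun i => ![v, v] i t) 0 (![u, u] 0) = (fun i => ![cu, v] i t) := by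
      funext i; fin_cases i <;> simp [hcudef, hczdef, Matrix.vecHead, Matrix.vecTail, Function.update]
    have t3 : Function.update (fun i => ![v, v] i t) 1 (![u, u] 1) = (fun i => ![v, cu] i t) := by
      funext i; fin_cases i <;> simp [hcudef, hczdef, Matrix.vecHead, Matrix.vecTail, Function.update]
    have t4 : Fin.cons (v t) (fun i => ![cu] i t) = (fun i => ![v, cu] i t) := by
      funext i; induction i using Fin.cases <;> simp [Matrix.cons_val_succ]
    have t5 : Function.update (fun i => ![cu] i t) 0 (![(0:E)] 0) = (fun i => ![cz] i t) := by
      funext i; fin_cases i <;> simp [hcudef, hczdef, Matrix.vecHead, Matrix.vecTail, Function.update]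
    have e : (iteratedFDeriv ℝ (2+1) f (γ t) (Fin.cons (v t) (fun i => ![v, v] i t)) +
        ∑ i, iteratedFDeriv ℝ 2 f (γ t) (Function.update (fun i => ![v, v] i t) i (![u, u] i)))
        + (iteratedFDeriv ℝ (1+1) f (γ t) (Fin.cons (v t) (fun i => ![cu] i t)) +
        ∑ i, iteratedFDeriv ℝ 1 f (γ t) (Function.update (fun i => ![cu] i t) i (![(0:E)] i)))
        = G3 t := by
      rw [Fin.sum_univ_two]
      rw [Fin.sum_univ_one]
      rw [hG3, t1, t2, t3, t4, t5]; ring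
    rw [← e]; exact h
  have d3 : ∀ t, HasDerivAt G3 (G4 t) t := by
    intro t
    have h1 := hasDerivAt_iter_multi hf (by norm_num) (hγ t) ![v, v, v] ![u, u, u]
      (by intro i; fin_cases i <;> first | exact hv t | exact hcu t | exact hcz t)
    have h2 := hasDerivAt_iter_multi hf (by norm_num) (hγ t) ![cu, v] ![(0:E), u]
      (by intro i; fin_cases i <;> first | exact hv t | exact hcu t | exact hcz t)
    have h3 := hasDerivAt_iter_multi hf (by norm_num) (hγ t) ![v, cu] ![u, (0:E)]
      (by intro i; fin_cases i <;> first | exact hv t | exact hcu t | exact hcz t)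
    have h5 := hasDerivAt_iter_multi hf (by norm_num) (hγ t) ![cz] ![(0:E)]
      (by intro i; fin_cases i <;> first | exact hv t | exact hcu t | exact hcz t)
    have h := (((h1.add h2).add h3).add h3).add h5
    have t1 : Fin.cons (v t) (fun i => ![v, v, v] i t) = (fun i => ![v, v, v, v] i t) := by
      funext i; induction i using Fin.cases <;> simp [Matrix.cons_val_succ]
    have t2 : Function.update (fun i => ![v, v, v] i t) 0 (![u, u, u] 0) = (fun i => ![cu, v, v] i t) := by
      funext i; fin_cases i <;> simp [hcudef, hczdef, Matrix.vecHead, Matrix.vecTail, Function.update]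
    have t3 : Function.update (fun i => ![v, v, v] i t) 1 (![u, u, u] 1) = (fun i => ![v, cu, v] i t) := by
      funext i; fin_cases i <;> simp [hcudef, hczdef, Matrix.vecHead, Matrix.vecTail, Function.update]
    have t4 : Function.update (fun i => ![v, v, v] i t) 2 (![u, u, u] 2) = (fun i => ![v, v, cu] i t) := by
      funext i; fin_cases i <;> simp [hcudef, hczdef, Matrix.vecHead, Matrix.vecTail, Function.update]
    have t5 : Fin.cons (v t) (fun i => ![cu, v] i t) = (fun i => ![v, cu, v] i t) := by
      funext i; induction i using Fin.cases <;> simp [Matrix.cons_val_succ]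
    have t6 : Function.update (fun i => ![cu, v] i t) 0 (![(0:E), u] 0) = (fun i => ![cz, v] i t) := by
      funext i; fin_cases i <;> simp [hcudef, hczdef, Matrix.vecHead, Matrix.vecTail, Function.update]
    have t7 : Function.update (fun i => ![cu, v] i t) 1 (![(0:E), u] 1) = (fun i => ![cu, cu] i t) := by
      funext i; fin_cases i <;> simp [hcudef, hczdef, Matrix.vecHead, Matrix.vecTail, Function.update]
    have t8 : Fin.cons (v t) (fun i => ![v, cu] i t) = (fun i => ![v, v, cu] i t) := by
      funext i; induction i using Fin.cases <;> simp [Matrix.cons_val_succ]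
    have t9 : Function.update (fun i => ![v, cu] i t) 0 (![u, (0:E)] 0) = (fun i => ![cu, cu] i t) := by
      funext i; fin_cases i <;> simp [hcudef, hczdef, Matrix.vecHead, Matrix.vecTail, Function.update]
    have t10 : Function.update (fun i => ![v, cu] i t) 1 (![u, (0:E)] 1) = (fun i => ![v, cz] i t) := by
      funext i; fin_cases i <;> simp [hcudef, hczdef, Matrix.vecHead, Matrix.vecTail, Function.update]
    have t11 : Fin.cons (v t) (fun i => ![cz] i t) = (fun i => ![v, cz] i t) := by
      funext i; induction i using Fin.cases <;> simp [Matrix.cons_val_succ]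
    have t12 : Function.update (fun i => ![cz] i t) 0 (![(0:E)] 0) = (fun i => ![cz] i t) := by
      funext i; fin_cases i <;> simp [hcudef, hczdef, Matrix.vecHead, Matrix.vecTail, Function.update]
    have e : ((((iteratedFDeriv ℝ (3+1) f (γ t) (Fin.cons (v t) (fun i => ![v, v, v] i t)) +
        ∑ i, iteratedFDeriv ℝ 3 f (γ t) (Function.update (fun i => ![v, v, v] i t) i (![u, u, u] i)))
        + (iteratedFDeriv ℝ (2+1) f (γ t) (Fin.cons (v t) (fun i => ![cu, v] i t)) +
        ∑ i, iteratedFDeriv ℝ 2 f (γ t) (Function.update (fun i => ![cu, v] i t) i (![(0:E), u] i))))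
        + (iteratedFDeriv ℝ (2+1) f (γ t) (Fin.cons (v t) (fun i => ![v, cu] i t)) +
        ∑ i, iteratedFDeriv ℝ 2 f (γ t) (Function.update (fun i => ![v, cu] i t) i (![u, (0:E)] i))))
        + (iteratedFDeriv ℝ (2+1) f (γ t) (Fin.cons (v t) (fun i => ![v, cu] i t)) +
        ∑ i, iteratedFDeriv ℝ 2 f (γ t) (Function.update (fun i => ![v, cu] i t) i (![u, (0:E)] i))))
        + (iteratedFDeriv ℝ (1+1) f (γ t) (Fin.cons (v t) (fun i => ![cz] i t)) +
        ∑ i, iteratedFDeriv ℝ 1 f (γ t) (Function.update (fun i => ![cz] i t) i (![(0:E)] i)))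
        = G4 t := by
      rw [Fin.sum_univ_three]
      rw [Fin.sum_univ_two]
      rw [Fin.sum_univ_two]
      rw [Fin.sum_univ_one]
      rw [hG4, t1, t2, t3, t4, t5, t6, t7, t8, t9, t10, t11, t12]; ring
    rw [← e]; exact h
  have d4 : Continuous G4 := by
    rw [continuous_iff_continuousAt]
    intro t
    have hA := hasDerivAt_iter_multi hf (by norm_num) (hγ t) ![v, v, v, v] ![u, u, u, u]
      (by intro i; fin_cases i <;> first | exact hv t | exact hcu t | exact hcz t)
    have hB := hasDerivAt_iter_multi hf (by norm_num) (hγ t) ![cu, v, v] ![(0:E), u, u]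
      (by intro i; fin_cases i <;> first | exact hv t | exact hcu t | exact hcz t)
    have hC := hasDerivAt_iter_multi hf (by norm_num) (hγ t) ![v, cu, v] ![u, (0:E), u]
      (by intro i; fin_cases i <;> first | exact hv t | exact hcu t | exact hcz t)
    have hD := hasDerivAt_iter_multi hf (by norm_num) (hγ t) ![v, v, cu] ![u, u, (0:E)]
      (by intro i; fin_cases i <;> first | exact hv t | exact hcu t | exact hcz t)
    have hF := hasDerivAt_iter_multi hf (by norm_num) (hγ t) ![cz, v] ![(0:E), u]
      (by intro i; fin_cases i <;> first | exact hv t | exact hcu t | exact hcz t)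
    have hG := hasDerivAt_iter_multi hf (by norm_num) (hγ t) ![cu, cu] ![(0:E), (0:E)]
      (by intro i; fin_cases i <;> first | exact hv t | exact hcu t | exact hcz t)
    have hJ := hasDerivAt_iter_multi hf (by norm_num) (hγ t) ![v, cz] ![u, (0:E)]
      (by intro i; fin_cases i <;> first | exact hv t | exact hcu t | exact hcz t)
    have hO := hasDerivAt_iter_multi hf (by norm_num) (hγ t) ![cz] ![(0:E)]
      (by intro i; fin_cases i <;> first | exact hv t | exact hcu t | exact hcz t)
    exact (((((((hA.add hB).add hC).add hD).add ((hC.add hF).add hG)).add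
      ((hD.add hG).add hJ)).add ((hD.add hG).add hJ)).add (hJ.add hO)).continuousAt
  have hγsm : ContDiff ℝ 6 γ := by
    rw [hγdef]
    exact (contDiff_const.add (contDiff_id.smul contDiff_const)).add
      ((contDiff_id.pow 2).smul contDiff_const)
  have hsm : ContDiff ℝ 6 G0 := hf.comp hγsm
  have E0 : G0 0 = f x := by simp only [hG0]; rw [hγ0]
  have w1 : (fun i => ![v] i (0:ℝ)) = ![b] := by
    funext i; fin_cases i <;> simp [hv0, hcudef, hczdef, Matrix.vecHead, Matrix.vecTail, Function.update]
  have w2 : (fun i => ![v, v] i (0:ℝ)) = ![b, b] := by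
    funext i; fin_cases i <;> simp [hv0, hcudef, hczdef, Matrix.vecHead, Matrix.vecTail, Function.update]
  have w3 : (fun i => ![cu] i (0:ℝ)) = ![u] := by
    funext i; fin_cases i <;> simp [hcudef, hczdef, Matrix.vecHead, Matrix.vecTail, Function.update]
  have w4 : (fun i => ![v, v, v] i (0:ℝ)) = ![b, b, b] := by
    funext i; fin_cases i <;> simp [hv0, hcudef, hczdef, Matrix.vecHead, Matrix.vecTail, Function.update]
  have w5 : (fun i => ![cu, v] i (0:ℝ)) = ![u, b] := by
    funext i; fin_cases i <;> simp [hv0, hcudef, hczdef, Matrix.vecHead, Matrix.vecTail, Function.update]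
  have w6 : (fun i => ![v, cu] i (0:ℝ)) = ![b, u] := by
    funext i; fin_cases i <;> simp [hv0, hcudef, hczdef, Matrix.vecHead, Matrix.vecTail, Function.update]
  have w7 : (fun i => ![cz] i (0:ℝ)) = ![(0:E)] := by
    funext i; fin_cases i <;> simp [hcudef, hczdef, Matrix.vecHead, Matrix.vecTail, Function.update]
  have w8 : (fun i => ![v, v, v, v] i (0:ℝ)) = ![b, b, b, b] := by
    funext i; fin_cases i <;> simp [hv0, hcudef, hczdef, Matrix.vecHead, Matrix.vecTail, Function.update]
  have w9 : (fun i => ![cu, v, v] i (0:ℝ)) = ![u, b, b] := by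
    funext i; fin_cases i <;> simp [hv0, hcudef, hczdef, Matrix.vecHead, Matrix.vecTail, Function.update]
  have w10 : (fun i => ![v, cu, v] i (0:ℝ)) = ![b, u, b] := by
    funext i; fin_cases i <;> simp [hv0, hcudef, hczdef, Matrix.vecHead, Matrix.vecTail, Function.update]
  have w11 : (fun i => ![v, v, cu] i (0:ℝ)) = ![b, b, u] := by
    funext i; fin_cases i <;> simp [hv0, hcudef, hczdef, Matrix.vecHead, Matrix.vecTail, Function.update]
  have w12 : (fun i => ![cz, v] i (0:ℝ)) = ![(0:E), b] := by
    funext i; fin_cases i <;> simp [hv0, hcudef, hczdef, Matrix.vecHead, Matrix.vecTail, Function.update]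
  have w13 : (fun i => ![cu, cu] i (0:ℝ)) = ![u, u] := by
    funext i; fin_cases i <;> simp [hcudef, hczdef, Matrix.vecHead, Matrix.vecTail, Function.update]
  have w14 : (fun i => ![v, cz] i (0:ℝ)) = ![b, (0:E)] := by
    funext i; fin_cases i <;> simp [hv0, hcudef, hczdef, Matrix.vecHead, Matrix.vecTail, Function.update]
  have E1 : G1 0 = iteratedFDeriv ℝ 1 f x ![b] := by
    simp only [hG1]; rw [hγ0, w1]
  have E2 : G2 0 = iteratedFDeriv ℝ 2 f x ![b, b] + iteratedFDeriv ℝ 1 f x ![u] := by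
    simp only [hG2]; rw [hγ0, w2, w3]
  have E3 : G3 0 = iteratedFDeriv ℝ 3 f x ![b, b, b]
      + iteratedFDeriv ℝ 2 f x ![u, b] + iteratedFDeriv ℝ 2 f x ![b, u]
      + iteratedFDeriv ℝ 2 f x ![b, u] + iteratedFDeriv ℝ 1 f x ![(0:E)] := by
    simp only [hG3]; rw [hγ0, w4, w5, w6, w7]
  have E4 : G4 0 = iteratedFDeriv ℝ 4 f x ![b, b, b, b]
      + iteratedFDeriv ℝ 3 f x ![u, b, b]
      + 2 * iteratedFDeriv ℝ 3 f x ![b, u, b]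
      + 3 * iteratedFDeriv ℝ 3 f x ![b, b, u]
      + 3 * iteratedFDeriv ℝ 2 f x ![u, u]
      + iteratedFDeriv ℝ 2 f x ![(0:E), b]
      + 3 * iteratedFDeriv ℝ 2 f x ![b, (0:E)]
      + iteratedFDeriv ℝ 1 f x ![(0:E)] := by
    simp only [hG4]; rw [hγ0, w8, w9, w10, w11, w12, w13, w14, w7]; ring
  refine ⟨fun k => match k with | 0 => G0 | 1 => G1 | 2 => G2 | 3 => G3 | _ => G4,
    hsm, fun s => rfl, ?_, d4, E0, E1, E2, E3, E4⟩
  intro k hk s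
  interval_cases k
  · exact d0 s
  · exact d1 s
  · exact d2 s
  · exact d3 s

section Consumers

variable {f : E → ℝ} {x : E}

lemma min_along {f : E → ℝ} {x : E} (hmin : IsLocalMin f x) {G : ℕ → ℝ → ℝ}
    (hG : ∀ s, G 0 s = f (x + s • b + s ^ 2 • a)) (hG0 : G 0 0 = f x) :
    ∀ᶠ s in 𝓝 (0:ℝ), G 0 0 ≤ G 0 s := by
  have hc : Continuous (fun s : ℝ => x + s • b + s ^ 2 • a) := by
    apply Continuous.add
    apply Continuous.add continuous_const
    · exact continuous_id.smul continuous_const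
    · exact (continuous_id.pow 2).smul continuous_const
  have ht : Tendsto (fun s : ℝ => x + s • b + s ^ 2 • a) (𝓝 0) (𝓝 x) := by
    have := hc.tendsto 0
    simpa using this
  filter_upwards [ht.eventually hmin] with s hs
  rw [hG0, hG s]
  exact hs

lemma fder1_zero (hmin : IsLocalMin f x) (w : E) : iteratedFDeriv ℝ 1 f x ![w] = 0 := by
  rw [iteratedFDeriv_one_apply, hmin.fderiv_eq_zero]
  rfl

/-- third-order condition, one direction -/
lemma cubic_nonneg (hf : ContDiff ℝ 6 f) (hmin : IsLocalMin f x) (c : E)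
    (hc2 : ∀ w, iteratedFDeriv ℝ 2 f x ![c, w] = 0) :
    0 ≤ iteratedFDeriv ℝ 3 f x ![c, c, c] := by
  obtain ⟨G, hsm, hGs, hd, hcont4, e0, e1, e2, e3, e4⟩ := chain_all hf x (0:E) c
  have hcont3 : Continuous (G 3) := by
    rw [continuous_iff_continuousAt]
    exact fun t => (hd 3 le_rfl t).continuousAt
  have key := chain_nonneg 2 G (hsm.of_le (by norm_num))
    (fun k hk s => hd k (by omega) s) hcont3
    (min_along hmin hGs e0) ?_
  · rw [e3] at key
    have z1 : iteratedFDeriv ℝ 2 f x ![(2:ℝ) • (0:E), c] = 0 := by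
      rw [sym2' hf, smul_zero]
      exact (iteratedFDeriv ℝ 2 f x).map_coord_zero 1 rfl
    have z2 : iteratedFDeriv ℝ 2 f x ![c, (2:ℝ) • (0:E)] = 0 := by
      rw [smul_zero]
      exact (iteratedFDeriv ℝ 2 f x).map_coord_zero 1 rfl
    rw [z1, z2, fder1_zero hmin] at key
    linarith
  · intro k h1 h2
    interval_cases k
    · rw [e1, fder1_zero hmin]
    · rw [e2, hc2 c, smul_zero]
      rw [show iteratedFDeriv ℝ 1 f x ![(0:E)] = 0 from fder1_zero hmin 0]
      ring

lemma cubic_zero (hf : ContDiff ℝ 6 f) (hmin : IsLocalMin f x) (b : E)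
    (hb2 : ∀ w, iteratedFDeriv ℝ 2 f x ![b, w] = 0) :
    iteratedFDeriv ℝ 3 f x ![b, b, b] = 0 := by
  have h1 := cubic_nonneg hf hmin b hb2
  have hb2' : ∀ w, iteratedFDeriv ℝ 2 f x ![-b, w] = 0 := by
    intro w
    have : (-b : E) = (-1 : ℝ) • b := by simp
    rw [this, sm2_0, hb2 w, mul_zero]
  have h2 := cubic_nonneg hf hmin (-b) hb2'
  have e : iteratedFDeriv ℝ 3 f x ![-b, -b, -b] = - iteratedFDeriv ℝ 3 f x ![b, b, b] := by
    have h3 : (-b : E) = (-1 : ℝ) • b := by simp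
    rw [h3, sm3_0, sm3_1, sm3_2]
    ring
  rw [e] at h2
  linarith

lemma quartic_ineq (hf : ContDiff ℝ 6 f) (hmin : IsLocalMin f x) (a b : E)
    (hb2 : ∀ w, iteratedFDeriv ℝ 2 f x ![b, w] = 0)
    (hb4 : iteratedFDeriv ℝ 4 f x ![b, b, b, b] = 0) :
    0 ≤ iteratedFDeriv ℝ 2 f x ![a, a] + iteratedFDeriv ℝ 3 f x ![a, b, b] := by
  obtain ⟨G, hsm, hGs, hd, hcont4, e0, e1, e2, e3, e4⟩ := chain_all hf x a b
  have hb2' : ∀ w, iteratedFDeriv ℝ 2 f x ![w, b] = 0 := fun w => by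
    rw [sym2' hf]; exact hb2 w
  have key := chain_nonneg 3 G (hsm.of_le (by norm_num)) hd hcont4
    (min_along hmin hGs e0) ?_
  · rw [e4] at key
    -- simplify all terms
    have s1 : iteratedFDeriv ℝ 3 f x ![(2:ℝ) • a, b, b] = 2 * iteratedFDeriv ℝ 3 f x ![a, b, b] :=
      sm3_0 _ 2 a b b
    have s2 : iteratedFDeriv ℝ 3 f x ![b, (2:ℝ) • a, b] = 2 * iteratedFDeriv ℝ 3 f x ![a, b, b] := by
      rw [sym3a hf, s1]
    have s3 : iteratedFDeriv ℝ 3 f x ![b, b, (2:ℝ) • a] = 2 * iteratedFDeriv ℝ 3 f x ![a, b, b] := by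
      rw [sym3b hf, s2]
    have s4 : iteratedFDeriv ℝ 2 f x ![(2:ℝ) • a, (2:ℝ) • a] = 4 * iteratedFDeriv ℝ 2 f x ![a, a] := by
      rw [sm2_0, sm2_1]; ring
    rw [s1, s2, s3, s4, hb4, hb2' (0:E), fder1_zero hmin,
      show iteratedFDeriv ℝ 2 f x ![b, (0:E)] = 0 from hb2 0] at key
    linarith
  · intro k h1 h2
    interval_cases k
    · rw [e1, fder1_zero hmin]
    · rw [e2, hb2 b, fder1_zero hmin]; ring
    · rw [e3, cubic_zero hf hmin b hb2, hb2' _, hb2 _, fder1_zero hmin]; ring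

lemma cross_zero (hf : ContDiff ℝ 6 f) (hmin : IsLocalMin f x) (a b : E)
    (hb2 : ∀ w, iteratedFDeriv ℝ 2 f x ![b, w] = 0)
    (hb4 : iteratedFDeriv ℝ 4 f x ![b, b, b, b] = 0) :
    iteratedFDeriv ℝ 3 f x ![a, b, b] = 0 := by
  set P : ℝ := iteratedFDeriv ℝ 2 f x ![a, a] with hP
  set S : ℝ := iteratedFDeriv ℝ 3 f x ![a, b, b] with hS
  have key : ∀ ε : ℝ, 0 ≤ ε^2 * P + ε * S := by
    intro ε
    have h := quartic_ineq hf hmin (ε • a) b hb2 hb4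
    rw [sm2_0, sm2_1, sm3_0] at h
    nlinarith [h]
  have h1 : 0 ≤ S := by
    have hT : Tendsto (fun ε : ℝ => ε * P + S) (𝓝[>] 0) (𝓝 S) := by
      have : Tendsto (fun ε : ℝ => ε * P + S) (𝓝 0) (𝓝 (0 * P + S)) :=
        ((continuous_id.mul continuous_const).add continuous_const).tendsto 0
      simpa using this.mono_left nhdsWithin_le_nhds
    have hev : ∀ᶠ ε in 𝓝[>] (0:ℝ), 0 ≤ ε * P + S := by
      filter_upwards [self_mem_nhdsWithin] with ε (hε : 0 < ε)
      have := key ε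
      nlinarith
    exact ge_of_tendsto hT hev
  have h2 : S ≤ 0 := by
    have hT : Tendsto (fun ε : ℝ => ε * P + S) (𝓝[<] 0) (𝓝 S) := by
      have : Tendsto (fun ε : ℝ => ε * P + S) (𝓝 0) (𝓝 (0 * P + S)) :=
        ((continuous_id.mul continuous_const).add continuous_const).tendsto 0
      simpa using this.mono_left nhdsWithin_le_nhds
    have hev : ∀ᶠ ε in 𝓝[<] (0:ℝ), ε * P + S ≤ 0 := by
      filter_upwards [self_mem_nhdsWithin] with ε (hε : ε < 0)
      have := key ε
      nlinarith
    exact le_of_tendsto hT hev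
  linarith

end Consumers

end Aux

/-- Sixth-order setting: with F₁ = ker ∇²f(x*), E₁ = F₁ᗮ,
F₂ = {h ∈ F₁ : ∀ h' ∈ F₁, ∇⁴f(x*)·h⊗h'^{⊗3} = 0}, the odd cross term
∇³f(x*)·p_{E₁}(h)⊗p_{F₂}(h)^{⊗2} vanishes. -/
theorem stmt9 (d : ℕ) (f : EuclideanSpace ℝ (Fin d) → ℝ) (x : EuclideanSpace ℝ (Fin d))
    (hf : ContDiff ℝ 6 f) (hmin : IsLocalMin f x)
    (F₁ F₂ : Submodule ℝ (EuclideanSpace ℝ (Fin d)))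
    (hF₁ : ∀ v, v ∈ F₁ ↔ ∀ w : EuclideanSpace ℝ (Fin d), iteratedFDeriv ℝ 2 f x ![v, w] = 0)
    (hF₂ : ∀ v, v ∈ F₂ ↔ v ∈ F₁ ∧ ∀ w ∈ F₁, iteratedFDeriv ℝ 4 f x ![v, w, w, w] = 0)
    (h : EuclideanSpace ℝ (Fin d)) :
    iteratedFDeriv ℝ 3 f x
      ![(F₁ᗮ.orthogonalProjectionOnto h : EuclideanSpace ℝ (Fin d)),
        (F₂.orthogonalProjectionOnto h : EuclideanSpace ℝ (Fin d)),
        (F₂.orthogonalProjectionOnto h : EuclideanSpace ℝ (Fin d))] = 0 := by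
  set a : EuclideanSpace ℝ (Fin d) := (F₁ᗮ.orthogonalProjectionOnto h : EuclideanSpace ℝ (Fin d))
  set b : EuclideanSpace ℝ (Fin d) := (F₂.orthogonalProjectionOnto h : EuclideanSpace ℝ (Fin d))
  have hbF₂ : b ∈ F₂ := (F₂.orthogonalProjectionOnto h).2
  have hbF₁ : b ∈ F₁ := ((hF₂ b).1 hbF₂).1
  have hb2 : ∀ w, iteratedFDeriv ℝ 2 f x ![b, w] = 0 := (hF₁ b).1 hbF₁
  have hb4 : iteratedFDeriv ℝ 4 f x ![b, b, b, b] = 0 := ((hF₂ b).1 hbF₂).2 b hbF₁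
  exact cross_zero hf hmin a b hb2 hb4
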